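/- Let R be a commutative ring in which 2 is invertible, m ≥ 1, and suppose n = 2r and φ = [[0, I_r],[I_r, 0]] (the split hyperbolic Gram matrix), so that Φ = diag(φ, [[0,I_m],[I_m,0]]) is the permutation matrix of a fixed-point-free involution σ of {1, …, n+2m}. Let EO_{n+2m}(R) be the subgroup of O_R(q ⊥ h^m) generated by the usual elementary orthogonal matrices oe_{kl}(a) = I_{n+2m} + a·e_{kl} − a·e_{σ(l),σ(k)} for a ∈ R and indices k ≠ l with k ≠ σ(l). Then EO_R(q, h^m) = EO_{n+2m}(R). -/

import Mathlib

/-!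
STATEMENT 9: Let R be a commutative ring in which 2 is invertible, m ≥ 1, n = 2r and
φ = [[0, I_r],[I_r, 0]], so that Φ = diag(φ, [[0,I_m],[I_m,0]]) is the permutation matrix of
a fixed-point-free involution σ.  Let EO_{n+2m}(R) be the subgroup generated by the usual
elementary orthogonal matrices oe_{kl}(a) = I + a·e_{kl} − a·e_{σ(l),σ(k)} (k ≠ l, k ≠ σ(l)).
Then EO_R(q, h^m) = EO_{n+2m}(R).
-/

namespace DSER9

open Matrix

variable {R : Type*} [CommRing R] [Invertible (2 : R)]

/-- Index of the z-block: `n = 2r` with the split hyperbolic Gram matrix. -/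
abbrev ZInd (r : ℕ) := Fin r ⊕ Fin r

/-- Index type for `Q ⊥ h^m`: the `z`-block, then the `x`-block, then the `f`-block. -/
abbrev Ind (r m : ℕ) := ZInd r ⊕ (Fin m ⊕ Fin m)

variable {r m : ℕ}

/-- The split hyperbolic Gram matrix `φ = [[0, I_r],[I_r, 0]]`. -/
def hphi (r : ℕ) : Matrix (ZInd r) (ZInd r) R := fromBlocks 0 1 1 0

instance : Invertible (hphi r : Matrix (ZInd r) (ZInd r) R) :=
  ⟨hphi r, by simp [hphi, fromBlocks_multiply, ← fromBlocks_one],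
   by simp [hphi, fromBlocks_multiply, ← fromBlocks_one]⟩

/-- The Gram matrix `Φ = diag(φ, [[0, I_m],[I_m, 0]])` of `q ⊥ h^m`. -/
def Phi (φ : Matrix (ZInd r) (ZInd r) R) (m : ℕ) : Matrix (Ind r m) (Ind r m) R :=
  fromBlocks φ 0 0 (fromBlocks 0 1 1 0)

/-- The elementary matrix `E_α = [[I_n, 0, −α*],[α, I_m, −(1/2)αα*],[0, 0, I_m]]`,
where `α* = φ⁻¹αᵀ`. -/
def Emat (φ : Matrix (ZInd r) (ZInd r) R) [Invertible φ] (α : Matrix (Fin m) (ZInd r) R) :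
    Matrix (Ind r m) (Ind r m) R :=
  fromBlocks 1 (fromCols 0 (-(⅟φ * αᵀ))) (fromRows α 0)
    (fromBlocks 1 (-((⅟(2:R)) • (α * (⅟φ * αᵀ)))) 0 1)

/-- The elementary matrix `E*_β = [[I_n, −β*, 0],[0, I_m, 0],[β, −(1/2)ββ*, I_m]]`,
where `β* = φ⁻¹βᵀ`. -/
def EmatStar (φ : Matrix (ZInd r) (ZInd r) R) [Invertible φ] (β : Matrix (Fin m) (ZInd r) R) :
    Matrix (Ind r m) (Ind r m) R :=
  fromBlocks 1 (fromCols (-(⅟φ * βᵀ)) 0) (fromRows 0 β)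
    (fromBlocks 1 0 (-((⅟(2:R)) • (β * (⅟φ * βᵀ)))) 1)

/-- The set of elementary generators `E_α`, `E*_β` inside the unit group. -/
def ElemSet (φ : Matrix (ZInd r) (ZInd r) R) [Invertible φ] (m : ℕ) :
    Set (Matrix (Ind r m) (Ind r m) R)ˣ :=
  {g | ∃ α : Matrix (Fin m) (ZInd r) R,
    (g : Matrix (Ind r m) (Ind r m) R) = Emat φ α ∨
    (g : Matrix (Ind r m) (Ind r m) R) = EmatStar φ α}

/-- The DSER elementary orthogonal group `EO_R(q, h^m)`. -/
def EOGrp (φ : Matrix (ZInd r) (ZInd r) R) [Invertible φ] (m : ℕ) :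
    Subgroup (Matrix (Ind r m) (Ind r m) R)ˣ :=
  Subgroup.closure (ElemSet φ m)

/-- The fixed-point-free involution `σ` of the index set whose permutation matrix is `Φ`. -/
def sigma (r m : ℕ) : Ind r m → Ind r m := Sum.map Sum.swap Sum.swap

/-- The usual elementary orthogonal matrix `oe_{kl}(a) = I + a e_{kl} − a e_{σ(l) σ(k)}`. -/
def oe (k l : Ind r m) (a : R) : Matrix (Ind r m) (Ind r m) R :=
  1 + single k l a - single (sigma r m l) (sigma r m k) a

/-- The usual elementary orthogonal group `EO_{n+2m}(R)` for the split form `Φ`. -/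
def EOusual (r m : ℕ) : Subgroup (Matrix (Ind r m) (Ind r m) R)ˣ :=
  Subgroup.closure
    {g | ∃ (k l : Ind r m) (a : R), k ≠ l ∧ k ≠ sigma r m l ∧
      (g : Matrix (Ind r m) (Ind r m) R) = oe k l a}

end DSER9
namespace DSER9
open Matrix
set_option linter.unusedSectionVars false
variable {R : Type*} [CommRing R] [Invertible (2 : R)] {r m : ℕ}

lemma invOf_hphi : (⅟(hphi r) : Matrix (ZInd r) (ZInd r) R) = hphi r := rfl

/-- generalized E_α with free (x,f) block X -/
def EmatX (α : Matrix (Fin m) (ZInd r) R) (X : Matrix (Fin m) (Fin m) R) :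
    Matrix (Ind r m) (Ind r m) R :=
  fromBlocks 1 (fromCols 0 (-((hphi r : Matrix (ZInd r) (ZInd r) R) * αᵀ))) (fromRows α 0)
    (fromBlocks 1 X 0 1)

def EmatSX (β : Matrix (Fin m) (ZInd r) R) (X : Matrix (Fin m) (Fin m) R) :
    Matrix (Ind r m) (Ind r m) R :=
  fromBlocks 1 (fromCols (-((hphi r : Matrix (ZInd r) (ZInd r) R) * βᵀ)) 0) (fromRows 0 β)
    (fromBlocks 1 0 X 1)

lemma Emat_eq (α : Matrix (Fin m) (ZInd r) R) :
    Emat (hphi r) α = EmatX α (-((⅟(2:R)) • (α * ((hphi r : Matrix (ZInd r) (ZInd r) R) * αᵀ)))) := by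
  rw [Emat, EmatX, invOf_hphi]

lemma EmatStar_eq (β : Matrix (Fin m) (ZInd r) R) :
    EmatStar (hphi r) β = EmatSX β (-((⅟(2:R)) • (β * ((hphi r : Matrix (ZInd r) (ZInd r) R) * βᵀ)))) := by
  rw [EmatStar, EmatSX, invOf_hphi]

lemma EmatX_zero : (EmatX 0 0 : Matrix (Ind r m) (Ind r m) R) = 1 := by
  simp [EmatX, ← fromBlocks_one]

lemma EmatSX_zero : (EmatSX 0 0 : Matrix (Ind r m) (Ind r m) R) = 1 := by
  simp [EmatSX, ← fromBlocks_one]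


omit [Invertible (2:R)] in
lemma fromCols_add' {o n₁ n₂ : Type*} (A C : Matrix o n₁ R) (B D : Matrix o n₂ R) :
    fromCols A B + fromCols C D = fromCols (A + C) (B + D) := by
  ext i (j | j) <;> simp

omit [Invertible (2:R)] in
lemma fromRows_add' {o m₁ m₂ : Type*} (A C : Matrix m₁ o R) (B D : Matrix m₂ o R) :
    fromRows A B + fromRows C D = fromRows (A + C) (B + D) := by
  ext (i | i) j <;> simp

lemma EmatX_mul (α β : Matrix (Fin m) (ZInd r) R) (X Y : Matrix (Fin m) (Fin m) R) :
    EmatX α X * EmatX β Y = EmatX (α + β) (X + Y - α * ((hphi r : Matrix (ZInd r) (ZInd r) R) * βᵀ)) := by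
  rw [EmatX, EmatX, EmatX, fromBlocks_multiply]
  rw [fromBlocks_inj]
  refine ⟨?_, ?_, ?_, ?_⟩
  · rw [fromCols_mul_fromRows]; simp
  · rw [fromCols_mul_fromBlocks]
    simp [Matrix.mul_add, transpose_add, fromCols_add', fromRows_add',
      fromBlocks_add, fromCols_ext_iff, fromRows_ext_iff, fromBlocks_inj]
    try abel
  · simp [fromBlocks_mul_fromRows, Matrix.add_mul, fromRows_add', fromCols_add',
      fromRows_ext_iff]
  · rw [fromRows_mul_fromCols, fromBlocks_multiply]
    simp [fromBlocks_add, fromBlocks_inj, fromCols_add', fromRows_add']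
    try abel

lemma EmatSX_mul (α β : Matrix (Fin m) (ZInd r) R) (X Y : Matrix (Fin m) (Fin m) R) :
    EmatSX α X * EmatSX β Y = EmatSX (α + β) (X + Y - α * ((hphi r : Matrix (ZInd r) (ZInd r) R) * βᵀ)) := by
  rw [EmatSX, EmatSX, EmatSX, fromBlocks_multiply]
  rw [fromBlocks_inj]
  refine ⟨?_, ?_, ?_, ?_⟩
  · rw [fromCols_mul_fromRows]; simp
  · rw [fromCols_mul_fromBlocks]
    simp [Matrix.mul_add, transpose_add, fromCols_add', fromRows_add',
      fromBlocks_add, fromCols_ext_iff, fromRows_ext_iff, fromBlocks_inj]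
    try abel
  · simp [fromBlocks_mul_fromRows, Matrix.add_mul, fromRows_add', fromCols_add',
      fromRows_ext_iff]
  · rw [fromRows_mul_fromCols, fromBlocks_multiply]
    simp [fromBlocks_add, fromBlocks_inj, fromCols_add', fromRows_add']
    try abel

end DSER9
namespace DSER9
open Matrix
set_option linter.unusedSectionVars false
variable {R : Type*} [CommRing R] [Invertible (2 : R)] {r m : ℕ}

lemma EmatX_mul_EmatSX (α β : Matrix (Fin m) (ZInd r) R) :
    EmatX α 0 * EmatSX β 0 =
      fromBlocks (1 - ((hphi r : Matrix (ZInd r) (ZInd r) R) * αᵀ) * β)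
        (fromCols (-((hphi r : Matrix (ZInd r) (ZInd r) R) * βᵀ)) (-((hphi r : Matrix (ZInd r) (ZInd r) R) * αᵀ))) (fromRows α β)
        (fromBlocks (1 - α * ((hphi r : Matrix (ZInd r) (ZInd r) R) * βᵀ)) 0 0 1) := by
  rw [EmatX, EmatSX, fromBlocks_multiply, fromBlocks_inj]
  refine ⟨?_, ?_, ?_, ?_⟩
  · rw [fromCols_mul_fromRows]; simp [sub_eq_add_neg]
  · rw [fromCols_mul_fromBlocks]
    simp [fromCols_add', fromCols_ext_iff]
  · simp [fromBlocks_mul_fromRows, fromRows_add', fromRows_ext_iff]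
  · rw [fromRows_mul_fromCols, fromBlocks_multiply, fromBlocks_add, fromBlocks_inj]
    simp [sub_eq_add_neg, add_comm]

lemma comm1 (α β : Matrix (Fin m) (ZInd r) R)
    (h1 : α * ((hphi r : Matrix (ZInd r) (ZInd r) R) * αᵀ) = (0 : Matrix (Fin m) (Fin m) R))
    (h2 : β * ((hphi r : Matrix (ZInd r) (ZInd r) R) * βᵀ) = (0 : Matrix (Fin m) (Fin m) R))
    (h3 : α * ((hphi r : Matrix (ZInd r) (ZInd r) R) * βᵀ) = (0 : Matrix (Fin m) (Fin m) R))
    (h4 : β * ((hphi r : Matrix (ZInd r) (ZInd r) R) * αᵀ) = (0 : Matrix (Fin m) (Fin m) R)) :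
    (EmatX α 0 * EmatSX β 0) * (EmatX (-α) 0 * EmatSX (-β) 0) =
      fromBlocks (1 - ((hphi r : Matrix (ZInd r) (ZInd r) R) * αᵀ) * β + ((hphi r : Matrix (ZInd r) (ZInd r) R) * βᵀ) * α) 0 0 1 := by
  rw [EmatX_mul_EmatSX, EmatX_mul_EmatSX]
  set A := (hphi r : Matrix (ZInd r) (ZInd r) R) * αᵀ with hA
  set B := (hphi r : Matrix (ZInd r) (ZInd r) R) * βᵀ with hB
  have hAn : (hphi r : Matrix (ZInd r) (ZInd r) R) * (-α)ᵀ = -A := by rw [transpose_neg, Matrix.mul_neg, hA]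
  have hBn : (hphi r : Matrix (ZInd r) (ZInd r) R) * (-β)ᵀ = -B := by rw [transpose_neg, Matrix.mul_neg, hB]
  rw [hAn, hBn]
  simp only [Matrix.mul_neg, Matrix.neg_mul, neg_neg, sub_neg_eq_add]
  rw [h3, sub_zero, fromBlocks_one, fromBlocks_multiply, fromBlocks_inj]
  have k1 : A * β * (A * β) = 0 := by
    rw [Matrix.mul_assoc, ← Matrix.mul_assoc β, h4, Matrix.zero_mul, Matrix.mul_zero]
  have k2 : A * β * B = 0 := by rw [Matrix.mul_assoc, h2, Matrix.mul_zero]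
  have k3 : A * β * A = 0 := by rw [Matrix.mul_assoc, h4, Matrix.mul_zero]
  have k5 : α * (A * β) = 0 := by rw [← Matrix.mul_assoc, h1, Matrix.zero_mul]
  have k6 : β * (A * β) = 0 := by rw [← Matrix.mul_assoc, h4, Matrix.zero_mul]
  refine ⟨?_, ?_, ?_, ?_⟩
  · rw [fromCols_mul_fromRows]
    simp only [Matrix.sub_mul, Matrix.mul_sub, Matrix.one_mul, Matrix.mul_one, k1,
      Matrix.neg_mul, Matrix.mul_neg, neg_neg]
    abel
  · simp [Matrix.mul_fromCols, fromCols_add', Matrix.sub_mul, k2, k3]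
  · simp [Matrix.fromRows_mul, fromRows_add', Matrix.mul_sub, k5, k6]
  · rw [fromRows_mul_fromCols]
    simp [h1, h2, h3, h4, fromBlocks_multiply, fromBlocks_add, fromBlocks_inj]

lemma comm2 (α β : Matrix (Fin m) (ZInd r) R)
    (h1 : α * ((hphi r : Matrix (ZInd r) (ZInd r) R) * αᵀ) = (0 : Matrix (Fin m) (Fin m) R))
    (h2 : β * ((hphi r : Matrix (ZInd r) (ZInd r) R) * βᵀ) = (0 : Matrix (Fin m) (Fin m) R))
    (h3 : ((hphi r : Matrix (ZInd r) (ZInd r) R) * αᵀ) * β = (0 : Matrix (ZInd r) (ZInd r) R))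
    (h4 : ((hphi r : Matrix (ZInd r) (ZInd r) R) * βᵀ) * α = (0 : Matrix (ZInd r) (ZInd r) R)) :
    (EmatX α 0 * EmatSX β 0) * (EmatX (-α) 0 * EmatSX (-β) 0) =
      fromBlocks 1 0 0
        (fromBlocks (1 - α * ((hphi r : Matrix (ZInd r) (ZInd r) R) * βᵀ)) 0 0 (1 + β * ((hphi r : Matrix (ZInd r) (ZInd r) R) * αᵀ))) := by
  rw [EmatX_mul_EmatSX, EmatX_mul_EmatSX]
  set A := (hphi r : Matrix (ZInd r) (ZInd r) R) * αᵀ with hA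
  set B := (hphi r : Matrix (ZInd r) (ZInd r) R) * βᵀ with hB
  have hAn : (hphi r : Matrix (ZInd r) (ZInd r) R) * (-α)ᵀ = -A := by rw [transpose_neg, Matrix.mul_neg, hA]
  have hBn : (hphi r : Matrix (ZInd r) (ZInd r) R) * (-β)ᵀ = -B := by rw [transpose_neg, Matrix.mul_neg, hB]
  rw [hAn, hBn]
  simp only [Matrix.mul_neg, Matrix.neg_mul, neg_neg, sub_neg_eq_add]
  rw [h3, sub_zero, fromBlocks_multiply, fromBlocks_inj]
  have k1 : B * (α * B) = 0 := by rw [← Matrix.mul_assoc, h4, Matrix.zero_mul]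
  have k2 : α * B * (α * B) = 0 := by rw [Matrix.mul_assoc, k1, Matrix.mul_zero]
  refine ⟨?_, ?_, ?_, ?_⟩
  · rw [fromCols_mul_fromRows]
    simp [h3, h4]
  · simp [Matrix.mul_fromCols, fromCols_add', fromCols_mul_fromBlocks,
      Matrix.sub_mul, Matrix.mul_sub, k1]
  · simp [Matrix.fromRows_mul, fromRows_add', fromBlocks_mul_fromRows, Matrix.mul_sub,
      Matrix.sub_mul, h1, h4, k1, ← Matrix.mul_assoc]
    simp [Matrix.mul_assoc, h4]
  · rw [fromRows_mul_fromCols, fromBlocks_multiply]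
    simp [h1, h2, fromBlocks_add, fromBlocks_inj, Matrix.sub_mul, Matrix.mul_sub, k2]
    abel

end DSER9
namespace DSER9
open Matrix
set_option linter.unusedSectionVars false
variable {R : Type*} [CommRing R] [Invertible (2 : R)] {r m : ℕ}

omit [Invertible (2:R)] in
lemma std_transpose {ι κ : Type*} [DecidableEq ι] [DecidableEq κ] (i : ι) (j : κ) (a : R) :
    (single i j a)ᵀ = single j i a := by
  ext k l
  simp only [transpose_apply, single, of_apply]
  by_cases h1 : i = l <;> by_cases h2 : j = k <;> simp [h1, h2, and_comm]

omit [Invertible (2:R)] in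
lemma std_mul_std {ι κ μ : Type*} [DecidableEq ι] [DecidableEq κ] [DecidableEq μ] [Fintype κ]
    (i : ι) (j j' : κ) (k : μ) (a b : R) :
    single i j a * single j' k b =
      if j = j' then single i k (a * b) else 0 := by
  ext s t
  simp only [Matrix.mul_apply, single, of_apply]
  by_cases h1 : i = s <;> by_cases h2 : k = t <;> by_cases h3 : j = j' <;>
    simp [h1, h2, h3, ite_and, Finset.sum_ite_eq] <;> intro hc <;> simp_all

omit [Invertible (2:R)] in
lemma hphi_mul {ι : Type*} (M : Matrix (ZInd r) ι R) (i : ZInd r) (j : ι) :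
    (((hphi r : Matrix (ZInd r) (ZInd r) R) * M : Matrix (ZInd r) ι R)) i j = M i.swap j := by
  cases i <;>
    simp [hphi, Matrix.mul_apply, Fintype.sum_sum_type, fromBlocks, Matrix.one_apply, ite_mul]

omit [Invertible (2:R)] in
lemma hphi_mul_std {ι : Type*} [DecidableEq ι] (q : ZInd r) (p : ι) (a : R) :
    (hphi r : Matrix (ZInd r) (ZInd r) R) * single q p a = single q.swap p a := by
  ext i j
  rw [hphi_mul]
  simp only [single, of_apply]
  rcases eq_or_ne (Sum.swap q) i with h | h
  · subst h; simp [Sum.swap_swap]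
  · have h' : q ≠ i.swap := fun hc => h (by rw [hc, Sum.swap_swap])
    simp [h, h']

end DSER9
namespace DSER9
open Matrix
set_option linter.unusedSectionVars false
set_option maxHeartbeats 2000000
section
variable {R : Type*} [CommRing R] [Invertible (2 : R)] {r m : ℕ}

omit [Invertible (2:R)] in
lemma EmatX_single (p : Fin m) (q : ZInd r) (a : R) :
    EmatX (single p q a) 0 = oe (Sum.inr (Sum.inl p)) (Sum.inl q) (a : R) := by
  rw [EmatX, std_transpose, hphi_mul_std]
  ext i j
  rcases i with (zi | xi | fi) <;> rcases j with (zj | xj | fj) <;>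
    simp [oe, sigma, Matrix.one_apply, single, Matrix.fromCols, Matrix.fromRows,
      fromBlocks] <;> aesop

omit [Invertible (2:R)] in
lemma EmatSX_single (p : Fin m) (q : ZInd r) (a : R) :
    EmatSX (single p q a) 0 = oe (Sum.inr (Sum.inr p)) (Sum.inl q) (a : R) := by
  rw [EmatSX, std_transpose, hphi_mul_std]
  ext i j
  rcases i with (zi | xi | fi) <;> rcases j with (zj | xj | fj) <;>
    simp [oe, sigma, Matrix.one_apply, single, Matrix.fromCols, Matrix.fromRows,
      fromBlocks] <;> aesop

omit [Invertible (2:R)] in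
lemma EmatX_skew_single (i j : Fin m) (a : R) :
    EmatX (0 : Matrix (Fin m) (ZInd r) R) (single i j a - single j i a) =
      oe (Sum.inr (Sum.inl i)) (Sum.inr (Sum.inr j)) (a : R) := by
  rw [EmatX]
  ext s t
  rcases s with (zi | xi | fi) <;> rcases t with (zj | xj | fj) <;>
    simp [oe, sigma, Matrix.one_apply, single, Matrix.fromCols, Matrix.fromRows,
      fromBlocks] <;> aesop

omit [Invertible (2:R)] in
lemma EmatSX_skew_single (i j : Fin m) (a : R) :
    EmatSX (0 : Matrix (Fin m) (ZInd r) R) (single i j a - single j i a) =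
      oe (Sum.inr (Sum.inr i)) (Sum.inr (Sum.inl j)) (a : R) := by
  rw [EmatSX]
  ext s t
  rcases s with (zi | xi | fi) <;> rcases t with (zj | xj | fj) <;>
    simp [oe, sigma, Matrix.one_apply, single, Matrix.fromCols, Matrix.fromRows,
      fromBlocks] <;> aesop

omit [Invertible (2:R)] in
lemma zz_oe (k l : ZInd r) (a : R) :
    fromBlocks (1 - single l.swap k.swap a + single k l a) 0 0
        (1 : Matrix (Fin m ⊕ Fin m) (Fin m ⊕ Fin m) R) =
      oe (Sum.inl k) (Sum.inl l) (a : R) := by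
  ext s t
  rcases s with (zi | xi | fi) <;> rcases t with (zj | xj | fj) <;>
    simp [oe, sigma, Matrix.one_apply, single, fromBlocks] <;> aesop

omit [Invertible (2:R)] in
lemma xx_oe (i j : Fin m) (c : R) :
    fromBlocks (1 : Matrix (ZInd r) (ZInd r) R) 0 0
        (fromBlocks (1 - single i j c) 0 0 (1 + single j i c)) =
      oe (Sum.inr (Sum.inl i)) (Sum.inr (Sum.inl j)) (-c : R) := by
  ext s t
  rcases s with (zi | xi | fi) <;> rcases t with (zj | xj | fj) <;>
    simp [oe, sigma, Matrix.one_apply, single, fromBlocks, sub_eq_add_neg] <;> aesop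

omit [Invertible (2:R)] in
lemma ff_oe (i j : Fin m) (c : R) :
    fromBlocks (1 : Matrix (ZInd r) (ZInd r) R) 0 0
        (fromBlocks (1 - single i j c) 0 0 (1 + single j i c)) =
      oe (Sum.inr (Sum.inr j)) (Sum.inr (Sum.inr i)) (c : R) := by
  ext s t
  rcases s with (zi | xi | fi) <;> rcases t with (zj | xj | fj) <;>
    simp [oe, sigma, Matrix.one_apply, single, fromBlocks] <;> aesop

end
end DSER9
namespace DSER9
open Matrix
set_option linter.unusedSectionVars false
set_option maxHeartbeats 2000000
section
variable {R : Type*} [CommRing R] [Invertible (2 : R)] {r m : ℕ}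

/-- The unit with value `EmatX α X`. -/
def uE (α : Matrix (Fin m) (ZInd r) R) (X : Matrix (Fin m) (Fin m) R) :
    (Matrix (Ind r m) (Ind r m) R)ˣ where
  val := EmatX α X
  inv := EmatX (-α) (-X - α * ((hphi r : Matrix (ZInd r) (ZInd r) R) * αᵀ))
  val_inv := by
    rw [EmatX_mul]
    have h1 : α + -α = 0 := by abel
    have h2 : X + (-X - α * ((hphi r : Matrix (ZInd r) (ZInd r) R) * αᵀ)) - α * ((hphi r : Matrix (ZInd r) (ZInd r) R) * (-α)ᵀ) = 0 := by
      rw [transpose_neg, Matrix.mul_neg, Matrix.mul_neg]; abel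
    rw [h1, h2, EmatX_zero]
  inv_val := by
    rw [EmatX_mul]
    have h1 : -α + α = 0 := by abel
    have h2 : -X - α * ((hphi r : Matrix (ZInd r) (ZInd r) R) * αᵀ) + X - -α * ((hphi r : Matrix (ZInd r) (ZInd r) R) * αᵀ) = 0 := by
      rw [Matrix.neg_mul]; abel
    rw [h1, h2, EmatX_zero]

/-- The unit with value `EmatSX β X`. -/
def uES (β : Matrix (Fin m) (ZInd r) R) (X : Matrix (Fin m) (Fin m) R) :
    (Matrix (Ind r m) (Ind r m) R)ˣ where
  val := EmatSX β X
  inv := EmatSX (-β) (-X - β * ((hphi r : Matrix (ZInd r) (ZInd r) R) * βᵀ))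
  val_inv := by
    rw [EmatSX_mul]
    have h1 : β + -β = 0 := by abel
    have h2 : X + (-X - β * ((hphi r : Matrix (ZInd r) (ZInd r) R) * βᵀ)) - β * ((hphi r : Matrix (ZInd r) (ZInd r) R) * (-β)ᵀ) = 0 := by
      rw [transpose_neg, Matrix.mul_neg, Matrix.mul_neg]; abel
    rw [h1, h2, EmatSX_zero]
  inv_val := by
    rw [EmatSX_mul]
    have h1 : -β + β = 0 := by abel
    have h2 : -X - β * ((hphi r : Matrix (ZInd r) (ZInd r) R) * βᵀ) + X - -β * ((hphi r : Matrix (ZInd r) (ZInd r) R) * βᵀ) = 0 := by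
      rw [Matrix.neg_mul]; abel
    rw [h1, h2, EmatSX_zero]

@[simp] lemma uE_val (α : Matrix (Fin m) (ZInd r) R) (X : Matrix (Fin m) (Fin m) R) :
    (uE α X : Matrix (Ind r m) (Ind r m) R) = EmatX α X := rfl

@[simp] lemma uES_val (β : Matrix (Fin m) (ZInd r) R) (X : Matrix (Fin m) (Fin m) R) :
    (uES β X : Matrix (Ind r m) (Ind r m) R) = EmatSX β X := rfl

lemma uE_mul (α β : Matrix (Fin m) (ZInd r) R) (X Y : Matrix (Fin m) (Fin m) R) :
    uE α X * uE β Y = uE (α + β) (X + Y - α * ((hphi r : Matrix (ZInd r) (ZInd r) R) * βᵀ)) :=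
  Units.ext (EmatX_mul α β X Y)

lemma uES_mul (α β : Matrix (Fin m) (ZInd r) R) (X Y : Matrix (Fin m) (Fin m) R) :
    uES α X * uES β Y = uES (α + β) (X + Y - α * ((hphi r : Matrix (ZInd r) (ZInd r) R) * βᵀ)) :=
  Units.ext (EmatSX_mul α β X Y)

lemma uE_inv (α : Matrix (Fin m) (ZInd r) R) (X : Matrix (Fin m) (Fin m) R) :
    (uE α X)⁻¹ = uE (-α) (-X - α * ((hphi r : Matrix (ZInd r) (ZInd r) R) * αᵀ)) := Units.ext rfl

lemma uES_inv (α : Matrix (Fin m) (ZInd r) R) (X : Matrix (Fin m) (Fin m) R) :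
    (uES α X)⁻¹ = uES (-α) (-X - α * ((hphi r : Matrix (ZInd r) (ZInd r) R) * αᵀ)) := Units.ext rfl

lemma uE_zero : (uE 0 0 : (Matrix (Ind r m) (Ind r m) R)ˣ) = 1 := Units.ext EmatX_zero

lemma uES_zero : (uES 0 0 : (Matrix (Ind r m) (Ind r m) R)ˣ) = 1 := Units.ext EmatSX_zero

/-- The canonical DSER generator as a unit. -/
def cE (α : Matrix (Fin m) (ZInd r) R) : (Matrix (Ind r m) (Ind r m) R)ˣ :=
  uE α (-((⅟(2:R)) • (α * ((hphi r : Matrix (ZInd r) (ZInd r) R) * αᵀ))))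

def cES (β : Matrix (Fin m) (ZInd r) R) : (Matrix (Ind r m) (Ind r m) R)ˣ :=
  uES β (-((⅟(2:R)) • (β * ((hphi r : Matrix (ZInd r) (ZInd r) R) * βᵀ))))

lemma cE_val (α : Matrix (Fin m) (ZInd r) R) :
    (cE α : Matrix (Ind r m) (Ind r m) R) = Emat (hphi r) α := (Emat_eq α).symm

lemma cES_val (β : Matrix (Fin m) (ZInd r) R) :
    (cES β : Matrix (Ind r m) (Ind r m) R) = EmatStar (hphi r) β := (EmatStar_eq β).symm

lemma cE_zero : (cE 0 : (Matrix (Ind r m) (Ind r m) R)ˣ) = 1 := by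
  rw [cE]; simp only [Matrix.zero_mul, smul_zero, neg_zero, uE_zero]

lemma cES_zero : (cES 0 : (Matrix (Ind r m) (Ind r m) R)ˣ) = 1 := by
  rw [cES]; simp only [Matrix.zero_mul, smul_zero, neg_zero, uES_zero]

lemma cE_add (α β : Matrix (Fin m) (ZInd r) R) :
    cE (α + β) = cE α * cE β *
      uE 0 ((⅟(2:R)) • (α * ((hphi r : Matrix (ZInd r) (ZInd r) R) * βᵀ) - β * ((hphi r : Matrix (ZInd r) (ZInd r) R) * αᵀ))) := by
  rw [cE, cE, cE, uE_mul, uE_mul]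
  apply Units.ext
  show EmatX _ _ = EmatX _ _
  rw [add_zero, transpose_zero, Matrix.mul_zero, Matrix.mul_zero, sub_zero]
  refine congrArg (EmatX (α + β)) ?_
  have expand : ((α + β) * ((hphi r : Matrix (ZInd r) (ZInd r) R) * (α + β)ᵀ)) =
      α * ((hphi r : Matrix (ZInd r) (ZInd r) R) * αᵀ) + α * ((hphi r : Matrix (ZInd r) (ZInd r) R) * βᵀ) + β * ((hphi r : Matrix (ZInd r) (ZInd r) R) * αᵀ) + β * ((hphi r : Matrix (ZInd r) (ZInd r) R) * βᵀ) := by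
    rw [transpose_add, Matrix.mul_add, Matrix.add_mul, Matrix.mul_add, Matrix.mul_add]
    abel
  rw [expand]
  match_scalars <;>
    first
      | ring1
      | linear_combination -invOf_mul_self (2:R)
      | linear_combination (-2 : R) * invOf_mul_self (2:R)

lemma cES_add (α β : Matrix (Fin m) (ZInd r) R) :
    cES (α + β) = cES α * cES β *
      uES 0 ((⅟(2:R)) • (α * ((hphi r : Matrix (ZInd r) (ZInd r) R) * βᵀ) - β * ((hphi r : Matrix (ZInd r) (ZInd r) R) * αᵀ))) := by
  rw [cES, cES, cES, uES_mul, uES_mul]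
  apply Units.ext
  show EmatSX _ _ = EmatSX _ _
  rw [add_zero, transpose_zero, Matrix.mul_zero, Matrix.mul_zero, sub_zero]
  refine congrArg (EmatSX (α + β)) ?_
  have expand : ((α + β) * ((hphi r : Matrix (ZInd r) (ZInd r) R) * (α + β)ᵀ)) =
      α * ((hphi r : Matrix (ZInd r) (ZInd r) R) * αᵀ) + α * ((hphi r : Matrix (ZInd r) (ZInd r) R) * βᵀ) + β * ((hphi r : Matrix (ZInd r) (ZInd r) R) * αᵀ) + β * ((hphi r : Matrix (ZInd r) (ZInd r) R) * βᵀ) := by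
    rw [transpose_add, Matrix.mul_add, Matrix.add_mul, Matrix.mul_add, Matrix.mul_add]
    abel
  rw [expand]
  match_scalars <;>
    first
      | ring1
      | linear_combination -invOf_mul_self (2:R)
      | linear_combination (-2 : R) * invOf_mul_self (2:R)

end
end DSER9
namespace DSER9
open Matrix
set_option linter.unusedSectionVars false
set_option maxHeartbeats 2000000
section
variable {R : Type*} [CommRing R] [Invertible (2 : R)] {r m : ℕ}

omit [Invertible (2:R)] in
lemma swap_ne (q : ZInd r) : Sum.swap q ≠ q := by cases q <;> simp

omit [Invertible (2:R)] in
lemma X0_single (p : Fin m) (q : ZInd r) (a : R) :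
    single p q a * ((hphi r : Matrix (ZInd r) (ZInd r) R) * (single p q a)ᵀ) =
      (0 : Matrix (Fin m) (Fin m) R) := by
  rw [std_transpose, hphi_mul_std, std_mul_std, if_neg (Ne.symm (swap_ne q))]

omit [Invertible (2:R)] in
lemma std_neg {ι κ : Type*} [DecidableEq ι] [DecidableEq κ] (p : ι) (q : κ) (a : R) :
    single p q (-a) = -single p q a := by
  ext s t
  simp only [single, of_apply, Matrix.neg_apply]
  split_ifs <;> simp

lemma cE_single (p : Fin m) (q : ZInd r) (a : R) :
    cE (single p q a) = uE (single p q a) 0 := by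
  rw [cE, X0_single]; simp

lemma cES_single (p : Fin m) (q : ZInd r) (a : R) :
    cES (single p q a) = uES (single p q a) 0 := by
  rw [cES, X0_single]; simp

lemma cE_mem (α : Matrix (Fin m) (ZInd r) R) : cE α ∈ EOGrp (hphi r) m :=
  Subgroup.subset_closure ⟨α, Or.inl (cE_val α)⟩

lemma cES_mem (β : Matrix (Fin m) (ZInd r) R) : cES β ∈ EOGrp (hphi r) m :=
  Subgroup.subset_closure ⟨β, Or.inr (cES_val β)⟩

lemma uE_single_mem (p : Fin m) (q : ZInd r) (a : R) :
    uE (single p q a) 0 ∈ EOGrp (hphi r) m := by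
  rw [← cE_single]; exact cE_mem _

lemma uES_single_mem (p : Fin m) (q : ZInd r) (a : R) :
    uES (single p q a) 0 ∈ EOGrp (hphi r) m := by
  rw [← cES_single]; exact cES_mem _

lemma uE_single_mem_usual (p : Fin m) (q : ZInd r) (a : R) :
    uE (single p q a) 0 ∈ EOusual r m :=
  Subgroup.subset_closure ⟨Sum.inr (Sum.inl p), Sum.inl q, a, by simp,
    by simp [sigma], by rw [uE_val, EmatX_single]⟩

lemma uES_single_mem_usual (p : Fin m) (q : ZInd r) (a : R) :
    uES (single p q a) 0 ∈ EOusual r m :=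
  Subgroup.subset_closure ⟨Sum.inr (Sum.inr p), Sum.inl q, a, by simp,
    by simp [sigma], by rw [uES_val, EmatSX_single]⟩

lemma uE_skew_single_mem_usual (i j : Fin m) (a : R) :
    uE (0 : Matrix (Fin m) (ZInd r) R)
      (single i j a - single j i a) ∈ EOusual r m := by
  by_cases h : i = j
  · subst h; rw [sub_self, uE_zero]; exact one_mem _
  · exact Subgroup.subset_closure ⟨Sum.inr (Sum.inl i), Sum.inr (Sum.inr j), a,
      by simp, by simp [sigma, h], by rw [uE_val, EmatX_skew_single]⟩

lemma uES_skew_single_mem_usual (i j : Fin m) (a : R) :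
    uES (0 : Matrix (Fin m) (ZInd r) R)
      (single i j a - single j i a) ∈ EOusual r m := by
  by_cases h : i = j
  · subst h; rw [sub_self, uES_zero]; exact one_mem _
  · exact Subgroup.subset_closure ⟨Sum.inr (Sum.inr i), Sum.inr (Sum.inl j), a,
      by simp, by simp [sigma, h], by rw [uES_val, EmatSX_skew_single]⟩

omit [Invertible (2:R)] in
lemma smul_skew_single (i j : Fin m) (c : R) :
    c • (single i j (1:R) - single j i 1) =
      single i j c - single j i c := by
  rw [smul_sub, smul_single, smul_single]
  simp

lemma skew_sum (S : Matrix (Fin m) (Fin m) R) (hS : Sᵀ = -S) :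
    S = ∑ p : Fin m × Fin m,
      ((⅟(2:R) * S p.1 p.2) • (single p.1 p.2 (1:R) - single p.2 p.1 1)) := by
  ext i j
  rw [Matrix.sum_apply]
  have hji : S j i = -S i j := by
    have := congrFun (congrFun hS i) j
    simpa using this
  rw [Fintype.sum_prod_type]
  simp only [Matrix.smul_apply, Matrix.sub_apply, single, of_apply, smul_eq_mul,
    mul_sub, ite_and]
  rw [Finset.sum_comm]
  simp [Finset.sum_ite_eq, Finset.sum_sub_distrib, hji]
  linear_combination (-(S i j)) * invOf_mul_self (2:R)

end
end DSER9
namespace DSER9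
open Matrix
set_option linter.unusedSectionVars false
set_option maxHeartbeats 4000000
section
variable {R : Type*} [CommRing R] [Invertible (2 : R)] {r m : ℕ}

omit [Invertible (2:R)] in
lemma EmatX_single' (p : Fin m) (q : ZInd r) (a : R) :
    EmatX (single p q a) 0 = oe (Sum.inl q.swap) (Sum.inr (Sum.inr p)) (-a : R) := by
  rw [EmatX, std_transpose, hphi_mul_std]
  ext i j
  rcases i with (zi | xi | fi) <;> rcases j with (zj | xj | fj) <;>
    simp [oe, sigma, Matrix.one_apply, single, Matrix.fromCols, 
      fromBlocks, Sum.swap_swap] <;> aesop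

omit [Invertible (2:R)] in
lemma EmatSX_single' (p : Fin m) (q : ZInd r) (a : R) :
    EmatSX (single p q a) 0 = oe (Sum.inl q.swap) (Sum.inr (Sum.inl p)) (-a : R) := by
  rw [EmatSX, std_transpose, hphi_mul_std]
  ext i j
  rcases i with (zi | xi | fi) <;> rcases j with (zj | xj | fj) <;>
    simp [oe, sigma, Matrix.one_apply, single, Matrix.fromCols, 
      fromBlocks, Sum.swap_swap] <;> aesop

lemma uE0_add (X Y : Matrix (Fin m) (Fin m) R) :
    uE (0 : Matrix (Fin m) (ZInd r) R) (X + Y) = uE 0 X * uE 0 Y := by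
  rw [uE_mul]; simp

lemma uES0_add (X Y : Matrix (Fin m) (Fin m) R) :
    uES (0 : Matrix (Fin m) (ZInd r) R) (X + Y) = uES 0 X * uES 0 Y := by
  rw [uES_mul]; simp

lemma uE_skew_mem (H : Subgroup (Matrix (Ind r m) (Ind r m) R)ˣ)
    (hgen : ∀ (i j : Fin m) (a : R),
      uE (0 : Matrix (Fin m) (ZInd r) R) (single i j a - single j i a) ∈ H)
    {S : Matrix (Fin m) (Fin m) R} (hS : Sᵀ = -S) : uE 0 S ∈ H := by
  classical
  have key : ∀ s : Finset (Fin m × Fin m),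
      uE (0 : Matrix (Fin m) (ZInd r) R) (∑ p ∈ s,
        ((⅟(2:R) * S p.1 p.2) • (single p.1 p.2 (1:R) - single p.2 p.1 1))) ∈ H := by
    intro s
    induction s using Finset.induction_on with
    | empty => rw [Finset.sum_empty, uE_zero]; exact one_mem _
    | @insert p s hp ih =>
        rw [Finset.sum_insert hp, uE0_add]
        exact mul_mem (by rw [smul_skew_single]; exact hgen _ _ _) ih
  have h := key Finset.univ
  rwa [← skew_sum S hS] at h

lemma uES_skew_mem (H : Subgroup (Matrix (Ind r m) (Ind r m) R)ˣ)
    (hgen : ∀ (i j : Fin m) (a : R),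
      uES (0 : Matrix (Fin m) (ZInd r) R) (single i j a - single j i a) ∈ H)
    {S : Matrix (Fin m) (Fin m) R} (hS : Sᵀ = -S) : uES 0 S ∈ H := by
  classical
  have key : ∀ s : Finset (Fin m × Fin m),
      uES (0 : Matrix (Fin m) (ZInd r) R) (∑ p ∈ s,
        ((⅟(2:R) * S p.1 p.2) • (single p.1 p.2 (1:R) - single p.2 p.1 1))) ∈ H := by
    intro s
    induction s using Finset.induction_on with
    | empty => rw [Finset.sum_empty, uES_zero]; exact one_mem _
    | @insert p s hp ih =>
        rw [Finset.sum_insert hp, uES0_add]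
        exact mul_mem (by rw [smul_skew_single]; exact hgen _ _ _) ih
  have h := key Finset.univ
  rwa [← skew_sum S hS] at h

omit [Invertible (2:R)] in
lemma hphi_transpose : (hphi r : Matrix (ZInd r) (ZInd r) R)ᵀ = hphi r := by
  simp [hphi, fromBlocks_transpose]

lemma skew_corr (α β : Matrix (Fin m) (ZInd r) R) :
    ((⅟(2:R)) • (α * ((hphi r : Matrix (ZInd r) (ZInd r) R) * βᵀ) - β * ((hphi r : Matrix (ZInd r) (ZInd r) R) * αᵀ)))ᵀ =
      -((⅟(2:R)) • (α * ((hphi r : Matrix (ZInd r) (ZInd r) R) * βᵀ) - β * ((hphi r : Matrix (ZInd r) (ZInd r) R) * αᵀ))) := by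
  simp only [transpose_smul, transpose_sub, transpose_mul, transpose_transpose,
    hphi_transpose, Matrix.mul_assoc]
  rw [← smul_neg, neg_sub]

omit [Invertible (2:R)] in
lemma matrix_rep (α : Matrix (Fin m) (ZInd r) R) :
    α = ∑ pq : Fin m × ZInd r, single pq.1 pq.2 (α pq.1 pq.2) := by
  ext i j
  rw [Matrix.sum_apply, Fintype.sum_prod_type]
  simp only [single, of_apply, ite_and]
  rw [Finset.sum_comm]
  simp [Finset.sum_ite_eq]

lemma cE_mem_of (H : Subgroup (Matrix (Ind r m) (Ind r m) R)ˣ)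
    (hsingle : ∀ (p : Fin m) (q : ZInd r) (a : R), uE (single p q a) 0 ∈ H)
    (hskew : ∀ S : Matrix (Fin m) (Fin m) R, Sᵀ = -S → uE 0 S ∈ H)
    (α : Matrix (Fin m) (ZInd r) R) : cE α ∈ H := by
  classical
  have key : ∀ s : Finset (Fin m × ZInd r),
      cE (∑ pq ∈ s, single pq.1 pq.2 (α pq.1 pq.2)) ∈ H := by
    intro s
    induction s using Finset.induction_on with
    | empty => rw [Finset.sum_empty, cE_zero]; exact one_mem _
    | @insert p s hp ih =>
        rw [Finset.sum_insert hp, cE_add]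
        exact mul_mem (mul_mem (by rw [cE_single]; exact hsingle _ _ _) ih)
          (hskew _ (skew_corr _ _))
  have h := key Finset.univ
  rwa [← matrix_rep α] at h

lemma cES_mem_of (H : Subgroup (Matrix (Ind r m) (Ind r m) R)ˣ)
    (hsingle : ∀ (p : Fin m) (q : ZInd r) (a : R), uES (single p q a) 0 ∈ H)
    (hskew : ∀ S : Matrix (Fin m) (Fin m) R, Sᵀ = -S → uES 0 S ∈ H)
    (β : Matrix (Fin m) (ZInd r) R) : cES β ∈ H := by
  classical
  have key : ∀ s : Finset (Fin m × ZInd r),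
      cES (∑ pq ∈ s, single pq.1 pq.2 (β pq.1 pq.2)) ∈ H := by
    intro s
    induction s using Finset.induction_on with
    | empty => rw [Finset.sum_empty, cES_zero]; exact one_mem _
    | @insert p s hp ih =>
        rw [Finset.sum_insert hp, cES_add]
        exact mul_mem (mul_mem (by rw [cES_single]; exact hsingle _ _ _) ih)
          (hskew _ (skew_corr _ _))
  have h := key Finset.univ
  rwa [← matrix_rep β] at h

end
end DSER9
namespace DSER9
open Matrix
set_option linter.unusedSectionVars false
set_option maxHeartbeats 4000000
section
variable {R : Type*} [CommRing R] [Invertible (2 : R)] {r m : ℕ}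

lemma tripleE (α β : Matrix (Fin m) (ZInd r) R) :
    uE α 0 * uE β 0 * (cE (α + β))⁻¹ =
      uE 0 ((⅟(2:R)) • ((α + β) * ((hphi r : Matrix (ZInd r) (ZInd r) R) * (α + β)ᵀ)) - α * ((hphi r : Matrix (ZInd r) (ZInd r) R) * βᵀ)) := by
  rw [cE, uE_inv, uE_mul, uE_mul]
  apply Units.ext
  show EmatX _ _ = EmatX _ _
  have h1 : α + β + -(α + β) = 0 := by abel
  rw [h1]
  refine congrArg (EmatX 0) ?_
  rw [transpose_neg, Matrix.mul_neg, Matrix.mul_neg]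
  abel

lemma tripleES (α β : Matrix (Fin m) (ZInd r) R) :
    uES α 0 * uES β 0 * (cES (α + β))⁻¹ =
      uES 0 ((⅟(2:R)) • ((α + β) * ((hphi r : Matrix (ZInd r) (ZInd r) R) * (α + β)ᵀ)) - α * ((hphi r : Matrix (ZInd r) (ZInd r) R) * βᵀ)) := by
  rw [cES, uES_inv, uES_mul, uES_mul]
  apply Units.ext
  show EmatSX _ _ = EmatSX _ _
  have h1 : α + β + -(α + β) = 0 := by abel
  rw [h1]
  refine congrArg (EmatSX 0) ?_
  rw [transpose_neg, Matrix.mul_neg, Matrix.mul_neg]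
  abel

omit [Invertible (2:R)] in
lemma expand_G (α β : Matrix (Fin m) (ZInd r) R) :
    ((α + β) * ((hphi r : Matrix (ZInd r) (ZInd r) R) * (α + β)ᵀ)) =
      α * ((hphi r : Matrix (ZInd r) (ZInd r) R) * αᵀ) + α * ((hphi r : Matrix (ZInd r) (ZInd r) R) * βᵀ) + β * ((hphi r : Matrix (ZInd r) (ZInd r) R) * αᵀ) + β * ((hphi r : Matrix (ZInd r) (ZInd r) R) * βᵀ) := by
  rw [transpose_add, Matrix.mul_add, Matrix.add_mul, Matrix.mul_add, Matrix.mul_add]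
  abel

omit [Invertible (2:R)] in
lemma cross_T (p p' : Fin m) (q : ZInd r) (c d : R) :
    single p q c * ((hphi r : Matrix (ZInd r) (ZInd r) R) * (single p' q.swap d)ᵀ) =
      single p p' (c * d) := by
  rw [std_transpose, hphi_mul_std, Sum.swap_swap, std_mul_std, if_pos rfl]

omit [Invertible (2:R)] in
lemma cross_T' (p p' : Fin m) (q : ZInd r) (c d : R) :
    single p' q.swap d * ((hphi r : Matrix (ZInd r) (ZInd r) R) * (single p q c)ᵀ) =
      single p' p (d * c) := by
  rw [std_transpose, hphi_mul_std, std_mul_std, if_pos rfl]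

/-- skew singles in the (x,f) block belong to `EOGrp`. -/
lemma uE_skew_single_mem (hr : 1 ≤ r) (i j : Fin m) (a : R) :
    uE (0 : Matrix (Fin m) (ZInd r) R)
      (single i j a - single j i a) ∈ EOGrp (hphi r) m := by
  set q0 : ZInd r := Sum.inl ⟨0, hr⟩ with hq0
  have h := tripleE (single i q0 (-(2*a))) (single j q0.swap (1:R))
  have hval : (⅟(2:R)) • ((single i q0 (-(2*a)) + single j q0.swap (1:R)) *
        ((hphi r : Matrix (ZInd r) (ZInd r) R) * (single i q0 (-(2*a)) + single j q0.swap (1:R))ᵀ)) -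
        single i q0 (-(2*a)) * ((hphi r : Matrix (ZInd r) (ZInd r) R) * (single j q0.swap (1:R))ᵀ) =
      single i j a - single j i a := by
    rw [expand_G, X0_single, X0_single, cross_T, cross_T']
    have e1 : (⅟(2:R)) * (-(2*a)) = -a := by
      rw [mul_neg, ← mul_assoc, invOf_mul_self, one_mul]
    simp only [zero_add, add_zero, smul_add, smul_single, smul_eq_mul]
    ext s t
    simp only [single, of_apply, Matrix.sub_apply, Matrix.add_apply]
    split_ifs <;> ring_nf <;>
      first
        | rfl
        | linear_combination (a : R) * invOf_mul_self (2:R)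
        | linear_combination (-a : R) * invOf_mul_self (2:R)
        | linear_combination (2*a : R) * invOf_mul_self (2:R)
        | linear_combination (-(2*a) : R) * invOf_mul_self (2:R)
  rw [hval] at h
  rw [← h]
  exact mul_mem (mul_mem (uE_single_mem _ _ _) (uE_single_mem _ _ _))
    (inv_mem (cE_mem _))

end
end DSER9
namespace DSER9
open Matrix
set_option linter.unusedSectionVars false
set_option maxHeartbeats 4000000
section
variable {R : Type*} [CommRing R] [Invertible (2 : R)] {r m : ℕ}

lemma uES_skew_single_mem (hr : 1 ≤ r) (i j : Fin m) (a : R) :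
    uES (0 : Matrix (Fin m) (ZInd r) R)
      (single i j a - single j i a) ∈ EOGrp (hphi r) m := by
  set q0 : ZInd r := Sum.inl ⟨0, hr⟩ with hq0
  have h := tripleES (single i q0 (-(2*a))) (single j q0.swap (1:R))
  have hval : (⅟(2:R)) • ((single i q0 (-(2*a)) + single j q0.swap (1:R)) *
        ((hphi r : Matrix (ZInd r) (ZInd r) R) * (single i q0 (-(2*a)) + single j q0.swap (1:R))ᵀ)) -
        single i q0 (-(2*a)) * ((hphi r : Matrix (ZInd r) (ZInd r) R) * (single j q0.swap (1:R))ᵀ) =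
      single i j a - single j i a := by
    rw [expand_G, X0_single, X0_single, cross_T, cross_T']
    simp only [zero_add, add_zero, smul_add, smul_single, smul_eq_mul]
    ext s t
    simp only [single, of_apply, Matrix.sub_apply, Matrix.add_apply]
    split_ifs <;> ring_nf <;>
      first
        | rfl
        | linear_combination (a : R) * invOf_mul_self (2:R)
        | linear_combination (-a : R) * invOf_mul_self (2:R)
        | linear_combination (2*a : R) * invOf_mul_self (2:R)
        | linear_combination (-(2*a) : R) * invOf_mul_self (2:R)
  rw [hval] at h
  rw [← h]
  exact mul_mem (mul_mem (uES_single_mem _ _ _) (uES_single_mem _ _ _))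
    (inv_mem (cES_mem _))

lemma oe_mem_EOGrp (hr : 1 ≤ r) (hm : 1 ≤ m) (k l : Ind r m) (a : R)
    (hkl : k ≠ l) (hks : k ≠ sigma r m l) :
    ∃ u : (Matrix (Ind r m) (Ind r m) R)ˣ, u ∈ EOGrp (hphi r) m ∧
      (u : Matrix (Ind r m) (Ind r m) R) = oe k l a := by
  set w : Fin m := ⟨0, hm⟩ with hw
  set q0 : ZInd r := Sum.inl ⟨0, hr⟩ with hq0
  rcases k with (zk | xk | fk) <;> rcases l with (zl | xl | fl)
  · -- z z
    have hne : zk ≠ zl := by simpa using hkl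
    refine ⟨(uE (single w zl a) 0 * uES (single w zk.swap (1:R)) 0) *
      (uE (single w zl (-a)) 0 * uES (single w zk.swap (-1:R)) 0),
      mul_mem (mul_mem (uE_single_mem _ _ _) (uES_single_mem _ _ _))
        (mul_mem (uE_single_mem _ _ _) (uES_single_mem _ _ _)), ?_⟩
    have h3 : single w zl a * ((hphi r : Matrix (ZInd r) (ZInd r) R) * (single w zk.swap (1:R))ᵀ) = (0 : Matrix (Fin m) (Fin m) R) := by
      rw [std_transpose, hphi_mul_std, Sum.swap_swap, std_mul_std,
        if_neg (fun h => hne h.symm)]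
    have h4 : single w zk.swap (1:R) * ((hphi r : Matrix (ZInd r) (ZInd r) R) * (single w zl a)ᵀ) = (0 : Matrix (Fin m) (Fin m) R) := by
      rw [std_transpose, hphi_mul_std, std_mul_std,
        if_neg (fun h => hne (by simpa using congrArg Sum.swap h))]
    simp only [Units.val_mul, uE_val, uES_val]
    rw [std_neg, std_neg, comm1 _ _ (X0_single _ _ _) (X0_single _ _ _) h3 h4,
      std_transpose, hphi_mul_std, std_transpose, hphi_mul_std, Sum.swap_swap,
      std_mul_std, if_pos rfl, std_mul_std, if_pos rfl, mul_one, one_mul, zz_oe]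
  · -- z x
    refine ⟨uES (single xl zk.swap (-a)) 0, uES_single_mem _ _ _, ?_⟩
    rw [uES_val, EmatSX_single', Sum.swap_swap, neg_neg]
  · -- z f
    refine ⟨uE (single fl zk.swap (-a)) 0, uE_single_mem _ _ _, ?_⟩
    rw [uE_val, EmatX_single', Sum.swap_swap, neg_neg]
  · -- x z
    exact ⟨uE (single xk zl a) 0, uE_single_mem _ _ _,
      by rw [uE_val, EmatX_single]⟩
  · -- x x
    have hne : xk ≠ xl := by simpa using hkl
    refine ⟨(uE (single xk q0 (-a)) 0 * uES (single xl q0.swap (1:R)) 0) *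
      (uE (single xk q0 a) 0 * uES (single xl q0.swap (-1:R)) 0),
      mul_mem (mul_mem (uE_single_mem _ _ _) (uES_single_mem _ _ _))
        (mul_mem (uE_single_mem _ _ _) (uES_single_mem _ _ _)), ?_⟩
    have h3 : ((hphi r : Matrix (ZInd r) (ZInd r) R) * (single xk q0 (-a))ᵀ) * single xl q0.swap (1:R)
        = (0 : Matrix (ZInd r) (ZInd r) R) := by
      rw [std_transpose, hphi_mul_std, std_mul_std, if_neg hne]
    have h4 : ((hphi r : Matrix (ZInd r) (ZInd r) R) * (single xl q0.swap (1:R))ᵀ) * single xk q0 (-a)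
        = (0 : Matrix (ZInd r) (ZInd r) R) := by
      rw [std_transpose, hphi_mul_std, Sum.swap_swap, std_mul_std,
        if_neg (fun h => hne h.symm)]
    simp only [Units.val_mul, uE_val, uES_val]
    rw [show (single xk q0 a : Matrix (Fin m) (ZInd r) R) =
        -(single xk q0 (-a)) by rw [std_neg, neg_neg],
      std_neg (a := (1:R)),
      comm2 _ _ (X0_single _ _ _) (X0_single _ _ _) h3 h4, cross_T, cross_T',
      mul_one, one_mul, xx_oe, neg_neg]
  · -- x f
    refine ⟨uE 0 (single xk fl a - single fl xk a),
      uE_skew_single_mem hr _ _ _, by rw [uE_val, EmatX_skew_single]⟩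
  · -- f z
    exact ⟨uES (single fk zl a) 0, uES_single_mem _ _ _,
      by rw [uES_val, EmatSX_single]⟩
  · -- f x
    refine ⟨uES 0 (single fk xl a - single xl fk a),
      uES_skew_single_mem hr _ _ _, by rw [uES_val, EmatSX_skew_single]⟩
  · -- f f
    have hne : fk ≠ fl := by simpa using hkl
    refine ⟨(uE (single fl q0 a) 0 * uES (single fk q0.swap (1:R)) 0) *
      (uE (single fl q0 (-a)) 0 * uES (single fk q0.swap (-1:R)) 0),
      mul_mem (mul_mem (uE_single_mem _ _ _) (uES_single_mem _ _ _))
        (mul_mem (uE_single_mem _ _ _) (uES_single_mem _ _ _)), ?_⟩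
    have h3 : ((hphi r : Matrix (ZInd r) (ZInd r) R) * (single fl q0 a)ᵀ) * single fk q0.swap (1:R)
        = (0 : Matrix (ZInd r) (ZInd r) R) := by
      rw [std_transpose, hphi_mul_std, std_mul_std, if_neg (fun h => hne h.symm)]
    have h4 : ((hphi r : Matrix (ZInd r) (ZInd r) R) * (single fk q0.swap (1:R))ᵀ) * single fl q0 a
        = (0 : Matrix (ZInd r) (ZInd r) R) := by
      rw [std_transpose, hphi_mul_std, Sum.swap_swap, std_mul_std, if_neg hne]
    simp only [Units.val_mul, uE_val, uES_val]
    rw [std_neg, std_neg (a := (1:R)),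
      comm2 _ _ (X0_single _ _ _) (X0_single _ _ _) h3 h4, cross_T, cross_T',
      mul_one, one_mul, ff_oe]

end
end DSER9

open DSER9 in
/-- For the split hyperbolic form on the z-block, the DSER elementary
orthogonal group coincides with the usual elementary orthogonal group `EO_{n+2m}(R)`. -/
theorem dser_EO_eq_usual_EO
    (R : Type*) [CommRing R] [Invertible (2 : R)]
    (r : ℕ) (hr : 1 ≤ r) (m : ℕ) (hm : 1 ≤ m) :
    EOGrp (R := R) (hphi r) m = EOusual r m := by
  apply le_antisymm
  · rw [EOGrp]
    refine (Subgroup.closure_le _).2 ?_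
    rintro g ⟨α, hα | hα⟩
    · have hg : g = cE α := Units.ext (by rw [hα, cE_val])
      rw [hg]
      exact cE_mem_of (EOusual r m) (fun p q a => uE_single_mem_usual p q a)
        (fun S hS => uE_skew_mem _ (fun i j a => uE_skew_single_mem_usual i j a) hS) α
    · have hg : g = cES α := Units.ext (by rw [hα, cES_val])
      rw [hg]
      exact cES_mem_of (EOusual r m) (fun p q a => uES_single_mem_usual p q a)
        (fun S hS => uES_skew_mem _ (fun i j a => uES_skew_single_mem_usual i j a) hS) α
  · rw [EOusual]
    refine (Subgroup.closure_le _).2 ?_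
    rintro g ⟨k, l, a, hkl, hks, hco⟩
    obtain ⟨u, hu, hval⟩ := oe_mem_EOGrp hr hm k l a hkl hks
    have hg : g = u := Units.ext (hco.trans hval.symm)
    rw [hg]
    exact hu
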